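/- arXiv:0903.1005 — 4 statements merged into one kernel-verified Lean document; each statement's English description precedes it below -/
import Mathlib

section
/- Let f : S → T be a map between topological spaces, σ a measure on the Borel σ-algebra of S whose set of discontinuity points D of f satisfies σ(D) = 0, and B a Borel subset of T such that the pushforward measure μ = σ ∘ f⁻¹ satisfies μ(∂B) = 0. Then σ(∂(f⁻¹(B))) = 0. -/
open Set Topology MeasureTheory

/-- If `σ` is a Borel measure on `S` giving measure zero to the set of discontinuity
points of a measurable map `f : S → T`, and `B` is a Borel set in `T` whose frontier is
null for the pushforward measure `μ = σ ∘ f⁻¹`, then the frontier of `f ⁻¹' B` is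
`σ`-null. -/
theorem sigma_frontier_preimage_eq_zero
    {S T : Type*} [TopologicalSpace S] [MeasurableSpace S] [BorelSpace S]
    [TopologicalSpace T] [MeasurableSpace T] [BorelSpace T]
    (σ : Measure S) (f : S → T) (hf : Measurable f)
    (hD : σ {x : S | ¬ ContinuousAt f x} = 0)
    (B : Set T) (hB : MeasurableSet B)
    (hμ : Measure.map f σ (frontier B) = 0) :
    σ (frontier (f ⁻¹' B)) = 0 := by
  have hsub : frontier (f ⁻¹' B) ⊆ f ⁻¹' (frontier B) ∪ {x : S | ¬ ContinuousAt f x} := by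
    intro x hx
    by_cases hc : ContinuousAt f x
    · left
      by_contra hfx
      rw [frontier_eq_closure_inter_closure, mem_preimage, mem_inter_iff, not_and_or] at hfx
      have hx' := hx
      rw [frontier_eq_closure_inter_closure, mem_inter_iff] at hx'
      rcases hfx with h | h
      · -- f x ∉ closure B
        have hnb : Bᶜ ∈ 𝓝 (f x) :=
          Filter.mem_of_superset (isClosed_closure.isOpen_compl.mem_nhds h)
            (compl_subset_compl.2 subset_closure)
        have : x ∈ interior (f ⁻¹' Bᶜ) := mem_interior_iff_mem_nhds.2 (hc hnb)
        rw [preimage_compl, interior_compl] at this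
        exact this hx'.1
      · -- f x ∉ closure Bᶜ
        have hnb : B ∈ 𝓝 (f x) :=
          Filter.mem_of_superset (isClosed_closure.isOpen_compl.mem_nhds h)
            (fun y hy => by_contra fun hyB => hy (subset_closure hyB))
        have : x ∈ interior (f ⁻¹' B) := mem_interior_iff_mem_nhds.2 (hc hnb)
        rw [← compl_compl (interior (f ⁻¹' B)), ← closure_compl] at this
        exact this hx'.2
    · exact Or.inr hc
  have h1 : σ (frontier (f ⁻¹' B)) ≤
      σ (f ⁻¹' (frontier B)) + σ {x : S | ¬ ContinuousAt f x} :=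
    (measure_mono hsub).trans (measure_union_le _ _)
  have h2 : σ (f ⁻¹' (frontier B)) = 0 := by
    rw [← Measure.map_apply hf isClosed_frontier.measurableSet, hμ]
  rw [h2, hD, add_zero] at h1
  exact le_antisymm h1 zero_le
end

section
/- Let X be a random vector in ℝ^d whose tail is regularly varying with index α > 0 and spectral measure σ, in the sense that the measures Q_n defined by Q_n((r,∞) × B) = n · P(X/‖X‖ ∈ B, ‖X‖ > r b_n) converge vaguely on (0,∞) × S^{d-1} to Q = m_α × σ. Let h : S^{d-1} → [0,∞) be bounded and continuous σ-almost everywhere. Then Y = X · h(X/‖X‖) has a regularly varying tail with the same index α and with spectral measure μ given by dμ/dσ = h^α; i.e., the measures Q̃_n((r,∞) × B) = n · P(Y/‖Y‖ ∈ B, ‖Y‖ > r b_n) converge vaguely to m_α × μ. -/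
open Set Topology MeasureTheory Filter

/-- The measure `m_α` on `(0,∞)` with density `α r^{-α-1}`. -/
noncomputable def mAlpha (α : ℝ) : Measure ℝ :=
  (volume.restrict (Set.Ioi (0 : ℝ))).withDensity
    fun r => ENNReal.ofReal (α * r ^ (-α - 1))

/-- Vague convergence of measures on `(0,∞) × S`: convergence of integrals of all
bounded continuous functions whose support is separated from zero. -/
def VagueTendsto {S : Type*} [TopologicalSpace S] [MeasurableSpace S]
    (Qn : ℕ → Measure (ℝ × S)) (Q : Measure (ℝ × S)) : Prop :=
  ∀ f : ℝ × S → ℝ, Continuous f → (∃ C : ℝ, ∀ p, |f p| ≤ C) →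
    (∃ ε > 0, ∀ p, f p ≠ 0 → ε < p.1) →
    Tendsto (fun n => ∫ p, f p ∂(Qn n)) atTop (nhds (∫ p, f p ∂Q))

section RVauxiliary

lemma RVaux.integrable_of_bdd_supp {S : Type*} [MeasurableSpace S]
    {Q : Measure (ℝ × S)} {G : ℝ × S → ℝ} {C ε : ℝ}
    (hGm : Measurable G) (hbd : ∀ p, |G p| ≤ C)
    (hsupp : ∀ p, G p ≠ 0 → ε < p.1)
    (hfin : Q {p : ℝ × S | ε < p.1} ≠ ⊤) :
    Integrable G Q := by
  have hs : MeasurableSet {p : ℝ × S | ε < p.1} :=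
    measurable_fst measurableSet_Ioi
  have hGi : G = Set.indicator {p : ℝ × S | ε < p.1} G := by
    funext p
    by_cases hG : G p = 0
    · by_cases hp : p ∈ {p : ℝ × S | ε < p.1} <;>
        simp [hG, Set.indicator_apply, hp]
    · exact (Set.indicator_of_mem (show p ∈ {p : ℝ × S | ε < p.1} from hsupp p hG) G).symm
  rw [hGi]
  refine (Measure.integrableOn_of_bounded (M := C) hfin hGm.aestronglyMeasurable ?_).integrable_indicator hs
  exact ae_of_all _ fun p => by simpa [Real.norm_eq_abs] using hbd p

lemma RVaux.mAlpha_Ioi_ne_top {α : ℝ} (hα : 0 < α) {ε : ℝ} (hε : 0 < ε) :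
    mAlpha α (Set.Ioi ε) ≠ ⊤ := by
  have hsub : Set.Ioi ε ⊆ Set.Ioi (0:ℝ) := Set.Ioi_subset_Ioi hε.le
  have h1 : mAlpha α (Set.Ioi ε)
      = ∫⁻ r in Set.Ioi ε, ENNReal.ofReal (α * r ^ (-α - 1)) ∂volume := by
    rw [mAlpha, withDensity_apply _ measurableSet_Ioi,
      Measure.restrict_restrict measurableSet_Ioi, Set.inter_eq_left.mpr hsub]
  have hInt : IntegrableOn (fun r : ℝ => α * r ^ (-α - 1)) (Set.Ioi ε) volume := by
    exact (integrableOn_Ioi_rpow_of_lt (by linarith) hε).const_mul α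
  rw [h1]
  exact hInt.lintegral_lt_top.ne

lemma RVaux.mAlpha_integral {α : ℝ} (hα : 0 < α) (φ : ℝ → ℝ) :
    ∫ r, φ r ∂(mAlpha α) = ∫ r in Set.Ioi (0:ℝ), φ r * (α * r ^ (-α - 1)) := by
  have hm : Measurable fun r : ℝ => (α * r ^ (-α - 1)).toNNReal := by
    apply Measurable.real_toNNReal
    exact (measurable_id.pow_const _).const_mul α
  have h1 : mAlpha α = (volume.restrict (Set.Ioi (0:ℝ))).withDensity
      fun r => ((α * r ^ (-α - 1)).toNNReal : ENNReal) := rfl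
  rw [h1, integral_withDensity_eq_integral_smul hm φ]
  refine setIntegral_congr_fun measurableSet_Ioi fun r hr => ?_
  have hpos : 0 ≤ α * r ^ (-α - 1) :=
    mul_nonneg hα.le (Real.rpow_nonneg (le_of_lt hr) _)
  rw [NNReal.smul_def, smul_eq_mul, mul_comm]
  congr 1
  exact Real.coe_toNNReal _ hpos

lemma RVaux.mAlpha_scaling {α : ℝ} (hα : 0 < α) {ψ : ℝ → ℝ}
    {ε : ℝ} (hε : 0 < ε) (hs : ∀ s, ψ s ≠ 0 → ε < s)
    {c : ℝ} (hc : 0 ≤ c) :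
    ∫ r, ψ (r * c) ∂(mAlpha α) = c ^ α * ∫ r, ψ r ∂(mAlpha α) := by
  rcases eq_or_lt_of_le hc with hc0 | hcpos
  · have hψ0 : ψ 0 = 0 := by
      by_contra hne
      exact absurd (hs 0 hne) (by linarith)
    simp only [← hc0, mul_zero, hψ0, Real.zero_rpow hα.ne', zero_mul]
    rw [RVaux.mAlpha_integral hα]
    simp
  · rw [RVaux.mAlpha_integral hα, RVaux.mAlpha_integral hα]
    set F : ℝ → ℝ := fun s => ψ s * (α * (s / c) ^ (-α - 1)) with hF
    have hFeq : ∀ r : ℝ, ψ (r * c) * (α * r ^ (-α - 1)) = F (r * c) := by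
      intro r
      simp only [hF, mul_div_cancel_right₀ _ hcpos.ne']
    have h2 : (∫ r in Set.Ioi (0:ℝ), ψ (r * c) * (α * r ^ (-α - 1)))
        = ∫ r in Set.Ioi (0:ℝ), F (r * c) := by
      simp_rw [hFeq]
    rw [h2, integral_comp_mul_right_Ioi F 0 hcpos, zero_mul]
    have h3 : (∫ s in Set.Ioi (0:ℝ), F s)
        = ∫ s in Set.Ioi (0:ℝ), (ψ s * (α * s ^ (-α - 1))) * c ^ (α + 1) := by
      refine setIntegral_congr_fun measurableSet_Ioi fun s hs' => ?_
      have hspos : (0:ℝ) < s := hs'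
      simp only [hF]
      have hdiv : (s / c) ^ (-α - 1) = s ^ (-α - 1) * c ^ (α + 1) := by
        rw [Real.div_rpow hspos.le hcpos.le]
        rw [div_eq_mul_inv]
        congr 1
        rw [show -α - 1 = -(α + 1) by ring, Real.rpow_neg hcpos.le, inv_inv]
      rw [hdiv]; ring
    rw [h3, integral_mul_const]
    rw [smul_eq_mul]
    have hca : c⁻¹ * c ^ (α + 1) = c ^ α := by
      rw [Real.rpow_add hcpos, Real.rpow_one]
      field_simp
    calc c⁻¹ * ((∫ s in Set.Ioi (0:ℝ), ψ s * (α * s ^ (-α - 1))) * c ^ (α + 1))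
        = (c⁻¹ * c ^ (α + 1)) * ∫ s in Set.Ioi (0:ℝ), ψ s * (α * s ^ (-α - 1)) := by ring
      _ = c ^ α * ∫ s in Set.Ioi (0:ℝ), ψ s * (α * s ^ (-α - 1)) := by rw [hca]

lemma RVaux.lemA {S : Type*} [PseudoMetricSpace S] [MeasurableSpace S]
    [OpensMeasurableSpace S] [SecondCountableTopology S]
    (Qn : ℕ → Measure (ℝ × S)) (Q : Measure (ℝ × S))
    (hfinn : ∀ n, IsFiniteMeasure (Qn n))
    (hconv : VagueTendsto Qn Q)
    {G : ℝ × S → ℝ} {C ε : ℝ} (hε : 0 < ε)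
    (hGm : Measurable G) (hG0 : ∀ p, 0 ≤ G p) (hGC : ∀ p, G p ≤ C)
    (hsupp : ∀ p, G p ≠ 0 → ε < p.1)
    (hfin : Q {p : ℝ × S | ε < p.1} ≠ ⊤)
    (hae : ∀ᵐ p ∂Q, ContinuousAt G p)
    {δ : ℝ} (hδ : 0 < δ) :
    ∀ᶠ n in atTop, ∫ p, G p ∂Q - δ < ∫ p, G p ∂(Qn n) := by
  rcases isEmpty_or_nonempty (ℝ × S) with hemp | hne
  · have hQ0 : ∀ (ν : Measure (ℝ × S)), (∫ p, G p ∂ν) = 0 := fun ν => by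
      rw [ν.eq_zero_of_isEmpty]; exact integral_zero_measure _
    exact Eventually.of_forall fun n => by rw [hQ0, hQ0]; linarith
  -- the Lipschitz regularizations
  set L : ℕ → ℝ × S → ℝ := fun k x => ⨅ y, (G y + (k : ℝ) * dist x y) with hL
  have hbddB : ∀ (k : ℕ) (x : ℝ × S),
      BddBelow (Set.range fun y => G y + (k : ℝ) * dist x y) := by
    intro k x
    refine ⟨0, ?_⟩
    rintro _ ⟨y, rfl⟩
    have h1 := hG0 y
    have h2 : (0:ℝ) ≤ (k : ℝ) * dist x y :=
      mul_nonneg (Nat.cast_nonneg k) dist_nonneg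
    show (0:ℝ) ≤ G y + (k : ℝ) * dist x y
    linarith
  have hL0 : ∀ k x, 0 ≤ L k x := by
    intro k x
    refine le_ciInf fun y => ?_
    have h2 : (0:ℝ) ≤ (k : ℝ) * dist x y :=
      mul_nonneg (Nat.cast_nonneg k) dist_nonneg
    linarith [hG0 y]
  have hLG : ∀ k x, L k x ≤ G x := by
    intro k x
    have := ciInf_le (hbddB k x) x
    simpa using this
  have hLC : ∀ k x, L k x ≤ C := fun k x => (hLG k x).trans (hGC x)
  have hLmono : ∀ (j k : ℕ), j ≤ k → ∀ x, L j x ≤ L k x := by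
    intro j k hjk x
    refine le_ciInf fun y => ?_
    refine (ciInf_le (hbddB j x) y).trans ?_
    have : (j:ℝ) * dist x y ≤ (k:ℝ) * dist x y :=
      mul_le_mul_of_nonneg_right (by exact_mod_cast hjk) dist_nonneg
    linarith
  have hLlip : ∀ (k : ℕ) (x z : ℝ × S), L k x ≤ L k z + (k : ℝ) * dist x z := by
    intro k x z
    rw [← sub_le_iff_le_add]
    refine le_ciInf fun y => ?_
    have h1 : L k x ≤ G y + (k:ℝ) * dist x y := ciInf_le (hbddB k x) y
    have h2 : dist x y ≤ dist x z + dist z y := dist_triangle x z y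
    have h3 : (k:ℝ) * dist x y ≤ (k:ℝ) * (dist x z + dist z y) :=
      mul_le_mul_of_nonneg_left h2 (Nat.cast_nonneg k)
    nlinarith
  have hLcont : ∀ k, Continuous (L k) := by
    intro k
    refine (LipschitzWith.of_dist_le_mul (K := (k : NNReal)) fun x z => ?_).continuous
    rw [Real.dist_eq, abs_sub_le_iff]
    constructor
    · have := hLlip k x z
      push_cast
      linarith
    · have := hLlip k z x
      rw [dist_comm z x] at this
      push_cast
      linarith
  have hLsupp : ∀ k x, L k x ≠ 0 → ε < x.1 := by
    intro k x hx
    apply hsupp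
    intro hGx
    exact hx (le_antisymm (by rw [← hGx]; exact hLG k x) (hL0 k x))
  -- pointwise convergence at continuity points
  have htend : ∀ x, ContinuousAt G x → Tendsto (fun k => L k x) atTop (nhds (G x)) := by
    intro x hx
    refine tendsto_order.2 ⟨fun b hb => ?_, fun b hb => Eventually.of_forall fun k =>
      lt_of_le_of_lt (hLG k x) hb⟩
    set b' := (b + G x) / 2 with hb'
    have hb'1 : b < b' := by simp only [hb']; linarith
    have hb'2 : b' < G x := by simp only [hb']; linarith
    obtain ⟨r, hr, hball⟩ := Metric.continuousAt_iff.1 hx (G x - b') (by linarith)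
    have hCb : b' ≤ C := hb'2.le.trans (hGC x)
    obtain ⟨K, hK⟩ : ∃ K : ℕ, C ≤ (K : ℝ) * r := by
      obtain ⟨K, hK⟩ := exists_nat_ge (C / r)
      exact ⟨K, by rw [div_le_iff₀ hr] at hK; linarith⟩
    refine eventually_atTop.2 ⟨K, fun k hk => ?_⟩
    have hgoal : b' ≤ L k x := by
      refine le_ciInf fun y => ?_
      by_cases hdy : dist y x < r
      · have hb2 := hball hdy
        rw [Real.dist_eq, abs_sub_lt_iff] at hb2
        have hby : b' < G y := by linarith [hb2.2]
        have hnn : (0:ℝ) ≤ (k:ℝ) * dist x y :=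
          mul_nonneg (Nat.cast_nonneg k) dist_nonneg
        linarith
      · push_neg at hdy
        have h1 : (K:ℝ) * r ≤ (k:ℝ) * dist x y := by
          rw [dist_comm]
          have : (K:ℝ) ≤ (k:ℝ) := by exact_mod_cast hk
          nlinarith [dist_nonneg (x := y) (y := x), hr.le]
        linarith [hG0 y]
    linarith
  -- integrability
  have hintL : ∀ k, Integrable (L k) Q := fun k =>
    RVaux.integrable_of_bdd_supp (hLcont k).measurable
      (fun p => by rw [abs_of_nonneg (hL0 k p)]; exact hLC k p) (hLsupp k) hfin
  have hintG : Integrable G Q :=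
    RVaux.integrable_of_bdd_supp hGm
      (fun p => by rw [abs_of_nonneg (hG0 p)]; exact hGC p) hsupp hfin
  -- monotone convergence of ∫ L k dQ to ∫ G dQ
  have hmc : Tendsto (fun k => ∫ p, L k p ∂Q) atTop (nhds (∫ p, G p ∂Q)) := by
    refine integral_tendsto_of_tendsto_of_monotone hintL hintG
      (Eventually.of_forall fun x j k hjk => hLmono j k hjk x) ?_
    filter_upwards [hae] with x hx using htend x hx
  obtain ⟨k, hk⟩ := (hmc.eventually (eventually_gt_nhds
    (show (∫ p, G p ∂Q) - δ/2 < ∫ p, G p ∂Q by linarith))).exists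
  have hck : Tendsto (fun n => ∫ p, L k p ∂(Qn n)) atTop (nhds (∫ p, L k p ∂Q)) := by
    refine hconv (L k) (hLcont k) ⟨max C 0, fun p => ?_⟩ ⟨ε, hε, hLsupp k⟩
    rw [abs_of_nonneg (hL0 k p)]
    exact (hLC k p).trans (le_max_left _ _)
  filter_upwards [hck.eventually (eventually_gt_nhds
    (show (∫ p, G p ∂Q) - δ < ∫ p, L k p ∂Q by linarith))] with n hn
  have hmono : ∫ p, L k p ∂(Qn n) ≤ ∫ p, G p ∂(Qn n) := by
    haveI := hfinn n
    refine integral_mono ?_ ?_ (fun x => hLG k x)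
    · exact RVaux.integrable_of_bdd_supp (hLcont k).measurable
        (fun p => by rw [abs_of_nonneg (hL0 k p)]; exact hLC k p) (hLsupp k)
        (measure_ne_top _ _)
    · exact RVaux.integrable_of_bdd_supp hGm
        (fun p => by rw [abs_of_nonneg (hG0 p)]; exact hGC p) hsupp (measure_ne_top _ _)
  linarith

lemma RVaux.lemB {S : Type*} [PseudoMetricSpace S] [MeasurableSpace S]
    [OpensMeasurableSpace S] [SecondCountableTopology S]
    (Qn : ℕ → Measure (ℝ × S)) (Q : Measure (ℝ × S))
    (hfinn : ∀ n, IsFiniteMeasure (Qn n))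
    (hconv : VagueTendsto Qn Q)
    {G : ℝ × S → ℝ} {C ε : ℝ} (hε : 0 < ε)
    (hGm : Measurable G) (hGC : ∀ p, |G p| ≤ C)
    (hsupp : ∀ p, G p ≠ 0 → ε < p.1)
    (hfin : Q {p : ℝ × S | ε / 2 < p.1} ≠ ⊤)
    (hae : ∀ᵐ p ∂Q, ContinuousAt G p) :
    Tendsto (fun n => ∫ p, G p ∂(Qn n)) atTop (nhds (∫ p, G p ∂Q)) := by
  rcases isEmpty_or_nonempty (ℝ × S) with hemp | hne
  · have hQ0 : ∀ (ν : Measure (ℝ × S)), (∫ p, G p ∂ν) = 0 := fun ν => by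
      rw [ν.eq_zero_of_isEmpty]; exact integral_zero_measure _
    simp only [hQ0]
    exact tendsto_const_nhds
  obtain ⟨p₀⟩ := hne
  have hC0 : 0 ≤ C := (abs_nonneg _).trans (hGC p₀)
  -- cutoff function
  set χ : ℝ × S → ℝ := fun p => C * max 0 (min 1 (2 / ε * p.1 - 1)) with hχdef
  have hχcont : Continuous χ := by
    apply continuous_const.mul
    exact continuous_const.max (continuous_const.min
      ((continuous_const.mul continuous_fst).sub continuous_const))
  have hχ01 : ∀ p, 0 ≤ χ p ∧ χ p ≤ C := by
    intro p
    constructor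
    · exact mul_nonneg hC0 (le_max_left _ _)
    · refine mul_le_of_le_one_right hC0 ?_
      exact max_le zero_le_one (min_le_left _ _)
  have hχ1 : ∀ p : ℝ × S, ε ≤ p.1 → χ p = C := by
    intro p hp
    have h1 : (1:ℝ) ≤ 2 / ε * p.1 - 1 := by
      have h2 : 2 / ε * ε ≤ 2 / ε * p.1 := by
        apply mul_le_mul_of_nonneg_left hp (by positivity)
      rw [div_mul_cancel₀] at h2 <;> [skip; exact hε.ne']
      linarith
    have : min 1 (2 / ε * p.1 - 1) = 1 := min_eq_left h1
    rw [hχdef]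
    simp only [this, max_eq_right zero_le_one, mul_one]
  have hχsupp : ∀ p : ℝ × S, χ p ≠ 0 → ε / 2 < p.1 := by
    intro p hp
    by_contra hle
    push_neg at hle
    apply hp
    have h2 : 2 / ε * p.1 - 1 ≤ 0 := by
      have : 2 / ε * p.1 ≤ 2 / ε * (ε / 2) := by
        apply mul_le_mul_of_nonneg_left hle (by positivity)
      have hεε : 2 / ε * (ε / 2) = 1 := by field_simp
      linarith
    have : min 1 (2 / ε * p.1 - 1) ≤ 0 := (min_le_right _ _).trans h2
    rw [hχdef]
    simp only [max_eq_left this, mul_zero]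
  have hχbd : ∀ p, |χ p| ≤ C := fun p => by
    rw [abs_of_nonneg (hχ01 p).1]; exact (hχ01 p).2
  have hχm : Measurable χ := hχcont.measurable
  -- the two auxiliary nonnegative functions
  set G₁ : ℝ × S → ℝ := fun p => G p + χ p with hG₁def
  set G₂ : ℝ × S → ℝ := fun p => χ p - G p with hG₂def
  have habs : ∀ p, |G p| ≤ χ p := by
    intro p
    by_cases hGp : G p = 0
    · rw [hGp, abs_zero]; exact (hχ01 p).1
    · rw [hχ1 p (hsupp p hGp).le]; exact hGC p
  have hG₁0 : ∀ p, 0 ≤ G₁ p := fun p => by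
    have := habs p; have := abs_le.1 this; simp only [hG₁def]; linarith [this.1]
  have hG₂0 : ∀ p, 0 ≤ G₂ p := fun p => by
    have := abs_le.1 (habs p); simp only [hG₂def]; linarith [this.2]
  have hG₁C : ∀ p, G₁ p ≤ 2 * C := fun p => by
    have h1 := abs_le.1 (hGC p); have h2 := (hχ01 p).2
    simp only [hG₁def]; linarith [h1.2]
  have hG₂C : ∀ p, G₂ p ≤ 2 * C := fun p => by
    have h1 := abs_le.1 (hGC p); have h2 := (hχ01 p).2
    simp only [hG₂def]; linarith [h1.1]
  have hε2 : 0 < ε / 2 := by linarith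
  have hGsupp' : ∀ p : ℝ × S, G p ≠ 0 → ε / 2 < p.1 := fun p hp => by
    have := hsupp p hp; linarith
  have hG₁supp : ∀ p : ℝ × S, G₁ p ≠ 0 → ε / 2 < p.1 := by
    intro p hp
    by_contra hle
    push_neg at hle
    apply hp
    have h1 : G p = 0 := by
      by_contra h; exact absurd (hGsupp' p h) (not_lt.2 hle)
    have h2 : χ p = 0 := by
      by_contra h; exact absurd (hχsupp p h) (not_lt.2 hle)
    simp only [hG₁def, h1, h2, add_zero]
  have hG₂supp : ∀ p : ℝ × S, G₂ p ≠ 0 → ε / 2 < p.1 := by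
    intro p hp
    by_contra hle
    push_neg at hle
    apply hp
    have h1 : G p = 0 := by
      by_contra h; exact absurd (hGsupp' p h) (not_lt.2 hle)
    have h2 : χ p = 0 := by
      by_contra h; exact absurd (hχsupp p h) (not_lt.2 hle)
    simp only [hG₂def, h1, h2, sub_zero]
  have hG₁ae : ∀ᵐ p ∂Q, ContinuousAt G₁ p := by
    filter_upwards [hae] with p hp using hp.add (hχcont.continuousAt)
  have hG₂ae : ∀ᵐ p ∂Q, ContinuousAt G₂ p := by
    filter_upwards [hae] with p hp using (hχcont.continuousAt).sub hp
  -- integrabilities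
  have hintG : Integrable G Q :=
    RVaux.integrable_of_bdd_supp hGm hGC hGsupp' hfin
  have hintχ : Integrable χ Q :=
    RVaux.integrable_of_bdd_supp hχm hχbd hχsupp hfin
  have hintGn : ∀ n, Integrable G (Qn n) := fun n => by
    haveI := hfinn n
    exact RVaux.integrable_of_bdd_supp hGm hGC hGsupp' (measure_ne_top _ _)
  have hintχn : ∀ n, Integrable χ (Qn n) := fun n => by
    haveI := hfinn n
    exact RVaux.integrable_of_bdd_supp hχm hχbd hχsupp (measure_ne_top _ _)
  -- convergence of the cutoff integrals
  have hχtend : Tendsto (fun n => ∫ p, χ p ∂(Qn n)) atTop (nhds (∫ p, χ p ∂Q)) :=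
    hconv χ hχcont ⟨C, hχbd⟩ ⟨ε / 2, hε2, hχsupp⟩
  -- split integrals
  have hsplit₁ : ∀ (ν : Measure (ℝ × S)), Integrable G ν → Integrable χ ν →
      (∫ p, G₁ p ∂ν) = (∫ p, G p ∂ν) + ∫ p, χ p ∂ν := fun ν h1 h2 =>
    integral_add h1 h2
  have hsplit₂ : ∀ (ν : Measure (ℝ × S)), Integrable G ν → Integrable χ ν →
      (∫ p, G₂ p ∂ν) = (∫ p, χ p ∂ν) - ∫ p, G p ∂ν := fun ν h1 h2 =>
    integral_sub h2 h1
  set a := ∫ p, G p ∂Q with ha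
  set c := ∫ p, χ p ∂Q with hc
  refine tendsto_order.2 ⟨fun b hb => ?_, fun b hb => ?_⟩
  · -- lower bound via G₁
    have hA := RVaux.lemA Qn Q hfinn hconv hε2 (G := G₁)
      (hGm.add hχm) hG₁0 hG₁C hG₁supp hfin hG₁ae (δ := (a - b) / 2) (by linarith)
    have hB := hχtend.eventually (eventually_lt_nhds
      (show c < c + (a - b) / 2 by linarith))
    filter_upwards [hA, hB] with n h1 h2
    rw [hsplit₁ Q hintG hintχ] at h1
    rw [hsplit₁ (Qn n) (hintGn n) (hintχn n)] at h1
    linarith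
  · -- upper bound via G₂
    have hA := RVaux.lemA Qn Q hfinn hconv hε2 (G := G₂)
      (hχm.sub hGm) hG₂0 hG₂C hG₂supp hfin hG₂ae (δ := (b - a) / 2) (by linarith)
    have hB := hχtend.eventually (eventually_lt_nhds
      (show c < c + (b - a) / 2 by linarith))
    filter_upwards [hA, hB] with n h1 h2
    rw [hsplit₂ Q hintG hintχ] at h1
    rw [hsplit₂ (Qn n) (hintGn n) (hintχn n)] at h1
    linarith

end RVauxiliary

instance mAlpha.instSigmaFinite (α : ℝ) : SigmaFinite (mAlpha α) := by
  unfold mAlpha; infer_instance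

local notation "SPH" d => (Metric.sphere (0 : EuclideanSpace ℝ (Fin d)) 1)

/-- Theorem 2: if `X` has a regularly varying tail of index `α` with spectral measure
`σ` (vague convergence of `Q_n = n·P((‖X‖/b_n, X/‖X‖) ∈ ·)` to `m_α × σ`) and
`h : S^{d-1} → ℝ₊` is bounded and continuous `σ`-a.e., then `Y = X·h(X/‖X‖)` has a
regularly varying tail with the same index `α` and spectral measure `μ`, `dμ/dσ = h^α`. -/
theorem radial_transformation_regularly_varying
    {d : ℕ} {Ω : Type*} [MeasurableSpace Ω] (P : Measure Ω) [IsProbabilityMeasure P]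
    (X : Ω → EuclideanSpace ℝ (Fin d)) (hX : Measurable X)
    (Θ : Ω → Metric.sphere (0 : EuclideanSpace ℝ (Fin d)) 1) (hΘmeas : Measurable Θ)
    (hΘ : ∀ ω, (Θ ω : EuclideanSpace ℝ (Fin d)) = ‖X ω‖⁻¹ • X ω)
    (σ : Measure (Metric.sphere (0 : EuclideanSpace ℝ (Fin d)) 1)) [IsFiniteMeasure σ]
    (α : ℝ) (hα : 0 < α)
    (b : ℕ → ℝ) (hbpos : ∀ n, 0 < b n)
    (Lt : ℝ → ℝ) (hLt : ∀ t > 0, Tendsto (fun x => Lt (t * x) / Lt x) atTop (nhds 1))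
    (hb : ∀ n : ℕ, b n = (n : ℝ) ^ (α⁻¹) * Lt n)
    (hRV : VagueTendsto
      (fun n => Measure.map (fun ω => (‖X ω‖ / b n, Θ ω)) ((n : ENNReal) • P))
      ((mAlpha α).prod σ))
    (h : Metric.sphere (0 : EuclideanSpace ℝ (Fin d)) 1 → ℝ)
    (hmeas : Measurable h) (hnonneg : ∀ θ, 0 ≤ h θ)
    (hbdd : ∃ M : ℝ, ∀ θ, h θ ≤ M)
    (hcont : σ {θ | ¬ ContinuousAt h θ} = 0) :
    VagueTendsto
      (fun n => Measure.map (fun ω => (‖X ω‖ * h (Θ ω) / b n, Θ ω)) ((n : ENNReal) • P))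
      ((mAlpha α).prod (σ.withDensity fun θ => ENNReal.ofReal (h θ ^ α))) := by
  intro f hfc hfb hfs
  obtain ⟨C, hC⟩ := hfb
  obtain ⟨ε₀, hε₀, hsupp⟩ := hfs
  obtain ⟨M, hM⟩ := hbdd
  set M' : ℝ := max M 1 with hM'def
  have hM' : ∀ θ, h θ ≤ M' := by
    intro θ; rw [hM'def]; exact (hM θ).trans (le_max_left _ _)
  have hM'pos : (0:ℝ) < M' := by
    rw [hM'def]; exact lt_of_lt_of_le one_pos (le_max_right _ _)
  set T : ℝ × (SPH d) → ℝ × (SPH d) := fun p => (p.1 * h p.2, p.2) with hT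
  have hTm : Measurable T :=
    (measurable_fst.mul (hmeas.comp measurable_snd)).prodMk measurable_snd
  set g : ℝ × (SPH d) → ℝ := fun p => f (T p) with hg
  have hfm : Measurable f := hfc.measurable
  have hgm : Measurable g := hfm.comp hTm
  set ε : ℝ := ε₀ / M' with hεdef
  have hε : 0 < ε := div_pos hε₀ hM'pos
  have hgsupp : ∀ p, g p ≠ 0 → ε < p.1 := by
    intro p hp
    have h1 : ε₀ < p.1 * h p.2 := hsupp (T p) hp
    by_contra hle
    push_neg at hle
    rcases le_or_gt p.1 0 with hp0 | hp0
    · nlinarith [hnonneg p.2]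
    · have key : p.1 * h p.2 ≤ ε₀ := by
        calc p.1 * h p.2 ≤ p.1 * M' := mul_le_mul_of_nonneg_left (hM' p.2) hp0.le
          _ ≤ (ε₀ / M') * M' := mul_le_mul_of_nonneg_right hle hM'pos.le
          _ = ε₀ := div_mul_cancel₀ _ hM'pos.ne'
      linarith
  have hgbd : ∀ p, |g p| ≤ C := fun p => hC (T p)
  set Qinf : Measure (ℝ × (SPH d)) := (mAlpha α).prod σ with hQinf
  set μm : Measure (SPH d) := σ.withDensity fun θ => ENNReal.ofReal (h θ ^ α) with hμm
  -- finiteness of the limit measures away from zero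
  have hμfin : μm Set.univ ≠ ⊤ := by
    rw [hμm, withDensity_apply _ MeasurableSet.univ, Measure.restrict_univ]
    have hb1 : (∫⁻ θ, ENNReal.ofReal (h θ ^ α) ∂σ)
        ≤ ∫⁻ _, ENNReal.ofReal (M' ^ α) ∂σ := by
      refine lintegral_mono fun θ => ENNReal.ofReal_le_ofReal ?_
      exact Real.rpow_le_rpow (hnonneg θ) (hM' θ) hα.le
    refine ne_top_of_le_ne_top ?_ hb1
    rw [lintegral_const]
    exact ENNReal.mul_ne_top ENNReal.ofReal_ne_top (measure_ne_top σ _)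
  have hset : ∀ ε' : ℝ, {p : ℝ × (SPH d) | ε' < p.1} = (Set.Ioi ε') ×ˢ (Set.univ : Set (SPH d)) := by
    intro ε'; ext p; simp [Set.mem_prod]
  have hQfin : ∀ ε' : ℝ, 0 < ε' → Qinf {p : ℝ × (SPH d) | ε' < p.1} ≠ ⊤ := by
    intro ε' hε'
    rw [hQinf, hset, Measure.prod_prod]
    exact ENNReal.mul_ne_top (RVaux.mAlpha_Ioi_ne_top hα hε') (measure_ne_top σ _)
  have hQfinμ : ((mAlpha α).prod μm) {p : ℝ × (SPH d) | ε₀ < p.1} ≠ ⊤ := by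
    rw [hset, Measure.prod_prod]
    exact ENNReal.mul_ne_top (RVaux.mAlpha_Ioi_ne_top hα hε₀) hμfin
  -- integrability
  have hfint : Integrable f ((mAlpha α).prod μm) :=
    RVaux.integrable_of_bdd_supp hfm hC hsupp hQfinμ
  have hgint : Integrable g Qinf :=
    RVaux.integrable_of_bdd_supp hgm hgbd hgsupp (hQfin ε hε)
  -- the change-of-variables identity
  set Ψ : (SPH d) → ℝ := fun θ => ∫ r, f (r, θ) ∂(mAlpha α) with hΨ
  have hscale : ∀ θ : (SPH d), (∫ r, f (r * h θ, θ) ∂(mAlpha α)) = h θ ^ α * Ψ θ :=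
    fun θ => RVaux.mAlpha_scaling hα hε₀ (fun s hsne => hsupp (s, θ) hsne) (hnonneg θ)
  have hfub1 : ∫ p, g p ∂Qinf = ∫ θ, (∫ r, f (r * h θ, θ) ∂(mAlpha α)) ∂σ :=
    integral_prod_symm g hgint
  have hμden : Measurable fun θ : (SPH d) => (h θ ^ α).toNNReal :=
    (hmeas.pow_const α).real_toNNReal
  have hfub2 : ∫ p, f p ∂((mAlpha α).prod μm) = ∫ θ, Ψ θ ∂μm :=
    integral_prod_symm f hfint
  have hwd : ∫ θ, Ψ θ ∂μm = ∫ θ, h θ ^ α * Ψ θ ∂σ := by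
    have h1 : μm = σ.withDensity fun θ => ((h θ ^ α).toNNReal : ENNReal) := rfl
    rw [h1, integral_withDensity_eq_integral_smul hμden Ψ]
    refine integral_congr_ae (Filter.Eventually.of_forall fun θ => ?_)
    show (h θ ^ α).toNNReal • Ψ θ = h θ ^ α * Ψ θ
    rw [NNReal.smul_def, smul_eq_mul, Real.coe_toNNReal _ (Real.rpow_nonneg (hnonneg θ) α)]
  have key : ∫ p, f p ∂((mAlpha α).prod μm) = ∫ p, g p ∂Qinf := by
    rw [hfub2, hwd, hfub1]
    exact integral_congr_ae (Filter.Eventually.of_forall fun θ => (hscale θ).symm)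
  -- a.e. continuity of g
  have hgae : ∀ᵐ p ∂Qinf, ContinuousAt g p := by
    rw [ae_iff]
    refine measure_mono_null (fun p hp => ?_)
      (show Qinf ((Set.univ : Set ℝ) ×ˢ {θ : (SPH d) | ¬ ContinuousAt h θ}) = 0 from ?_)
    · refine ⟨trivial, fun hcontθ => hp ?_⟩
      have hTc : ContinuousAt T p :=
        ContinuousAt.prodMk (continuousAt_fst.mul (hcontθ.comp continuousAt_snd)) continuousAt_snd
      exact (hfc.continuousAt).comp hTc
    · rw [hQinf, Measure.prod_prod, hcont, mul_zero]
  -- finiteness of the approximating measures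
  have hbase : ∀ n : ℕ, Measurable fun ω => (‖X ω‖ / b n, Θ ω) :=
    fun n => (hX.norm.div_const _).prodMk hΘmeas
  have hfinn : ∀ n, IsFiniteMeasure
      (Measure.map (fun ω => (‖X ω‖ / b n, Θ ω)) ((n : ENNReal) • P)) := by
    intro n
    constructor
    rw [Measure.map_apply (hbase n) MeasurableSet.univ, Set.preimage_univ,
      Measure.smul_apply, smul_eq_mul, measure_univ, mul_one]
    exact ENNReal.natCast_lt_top n
  -- apply the main convergence lemma
  have hmain := RVaux.lemB _ Qinf hfinn hRV hε hgm hgbd hgsupp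
    (hQfin (ε / 2) (by linarith)) hgae
  rw [key]
  refine hmain.congr fun n => ?_
  show (∫ p, g p ∂(Measure.map (fun ω => (‖X ω‖ / b n, Θ ω)) ((n : ENNReal) • P)))
      = ∫ p, f p ∂(Measure.map (fun ω => (‖X ω‖ * h (Θ ω) / b n, Θ ω)) ((n : ENNReal) • P))
  have hmm : Measure.map (fun ω => (‖X ω‖ * h (Θ ω) / b n, Θ ω)) ((n : ENNReal) • P)
      = Measure.map T (Measure.map (fun ω => (‖X ω‖ / b n, Θ ω)) ((n : ENNReal) • P)) := by
    rw [Measure.map_map hTm (hbase n)]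
    congr 1
    funext ω
    show (‖X ω‖ * h (Θ ω) / b n, Θ ω) = (‖X ω‖ / b n * h (Θ ω), Θ ω)
    rw [div_mul_eq_mul_div]
  rw [hmm, integral_map hTm.aemeasurable hfc.aestronglyMeasurable]
end

section
/- Let X be a random vector in ℝ^2 with regularly varying tail of index α and uniform spectral measure σ on S^1 ≅ [0, 2π) (dσ/dθ = 1/(2π)). Let μ be a probability measure on [0, 2π) with distribution function F(x) = μ([0,x]) and quantile function F⁻¹, and suppose F⁻¹ is continuous Lebesgue-almost everywhere on [0,1). Then the random vector Y with polar decomposition (‖X‖, F⁻¹(Θ/(2π))), where Θ ∈ [0,2π) is the angular part of X, has a regularly varying tail with the same index α and spectral measure μ. -/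
open Set Topology MeasureTheory Filter Real

/-- Distribution function `F(x) = μ([0,x])` of a measure on `[0,2π)`. -/
noncomputable def distF (μ : Measure ℝ) (x : ℝ) : ℝ := (μ (Set.Icc 0 x)).toReal

/-- Generalized inverse (quantile function) of `distF μ`. -/
noncomputable def quantileF (μ : Measure ℝ) (u : ℝ) : ℝ :=
  sInf {x : ℝ | 0 ≤ x ∧ u ≤ distF μ x}

section aux
variable (μ : Measure ℝ) [IsProbabilityMeasure μ]

lemma distF_mono : Monotone (distF μ) := fun a b hab =>
  ENNReal.toReal_mono (measure_ne_top μ _) (measure_mono (Icc_subset_Icc_right hab))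

lemma quantileF_nonneg (u : ℝ) : 0 ≤ quantileF μ u :=
  Real.sInf_nonneg (by rintro x ⟨h, -⟩; exact h)

lemma one_le_distF_twopi (hμsupp : μ (Set.Ico 0 (2 * π))ᶜ = 0) :
    (1 : ℝ) ≤ distF μ (2 * π) := by
  have h1 : (1 : ENNReal) ≤ μ (Set.Icc 0 (2 * π)) := by
    have : μ Set.univ ≤ μ (Set.Icc 0 (2 * π)) + μ (Set.Ico 0 (2 * π))ᶜ := by
      refine le_trans (measure_mono ?_) (measure_union_le _ _)
      intro x _
      by_cases hx : x ∈ Set.Ico 0 (2 * π)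
      · exact Or.inl ⟨hx.1, hx.2.le⟩
      · exact Or.inr hx
    simpa [hμsupp, measure_univ] using this
  calc (1:ℝ) = (1:ENNReal).toReal := by simp
  _ ≤ _ := ENNReal.toReal_mono (measure_ne_top μ _) h1

lemma quantile_set_nonempty (hμsupp : μ (Set.Ico 0 (2 * π))ᶜ = 0) {u : ℝ} (hu : u ≤ 1) :
    {x : ℝ | 0 ≤ x ∧ u ≤ distF μ x}.Nonempty :=
  ⟨2 * π, by positivity, hu.trans (one_le_distF_twopi μ hμsupp)⟩

lemma quantileF_le_of_le {u x : ℝ} (hx : 0 ≤ x) (hu : u ≤ distF μ x) :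
    quantileF μ u ≤ x :=
  csInf_le ⟨0, by rintro y ⟨h, -⟩; exact h⟩ ⟨hx, hu⟩

lemma le_distF_quantileF (hμsupp : μ (Set.Ico 0 (2 * π))ᶜ = 0) {u : ℝ} (hu : u ≤ 1) :
    u ≤ distF μ (quantileF μ u) := by
  set q := quantileF μ u with hq
  have hne := quantile_set_nonempty μ hμsupp hu
  have hstep : ∀ ε : ℝ, 0 < ε → u ≤ distF μ (q + ε) := by
    intro ε hε
    obtain ⟨y, ⟨hy0, hyF⟩, hylt⟩ := exists_lt_of_csInf_lt hne
      (show sInf {x : ℝ | 0 ≤ x ∧ u ≤ distF μ x} < q + ε by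
        rw [show sInf {x : ℝ | 0 ≤ x ∧ u ≤ distF μ x} = quantileF μ u from rfl, ← hq]
        linarith)
    exact hyF.trans (distF_mono μ hylt.le)
  have hstep' : ∀ n : ℕ, ENNReal.ofReal u ≤ μ (Set.Icc 0 (q + 1 / (n + 1))) := by
    intro n
    have h1 : (0:ℝ) < 1 / (n + 1) := by positivity
    have := hstep _ h1
    calc ENNReal.ofReal u ≤ ENNReal.ofReal (distF μ (q + 1 / (n + 1))) :=
          ENNReal.ofReal_le_ofReal this
    _ = μ (Set.Icc 0 (q + 1 / (n + 1))) := ENNReal.ofReal_toReal (measure_ne_top μ _)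
  have hiInter : (⋂ n : ℕ, Set.Icc 0 (q + 1 / (n + 1))) = Set.Icc 0 q := by
    ext x
    simp only [Set.mem_iInter, Set.mem_Icc]
    constructor
    · intro h
      refine ⟨(h 0).1, ?_⟩
      refine le_of_forall_pos_le_add (fun ε hε => ?_)
      obtain ⟨n, hn⟩ := exists_nat_one_div_lt hε
      exact (h n).2.trans (by linarith)
    · intro h n
      have hp : (0:ℝ) < 1 / ((n:ℝ) + 1) := by positivity
      exact ⟨h.1, h.2.trans (by linarith)⟩
  have htend : Tendsto (fun n : ℕ => μ (Set.Icc 0 (q + 1 / (n + 1)))) atTop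
      (𝓝 (μ (Set.Icc 0 q))) := by
    have := tendsto_measure_iInter_atTop (μ := μ)
      (s := fun n : ℕ => Set.Icc 0 (q + 1 / (n + 1)))
      (fun n => measurableSet_Icc.nullMeasurableSet)
      (fun a b hab => Set.Icc_subset_Icc_right (by
        have h1 : ((a:ℝ) + 1) ≤ (b:ℝ) + 1 := by exact_mod_cast Nat.succ_le_succ hab
        have h2 : (0:ℝ) < (a:ℝ) + 1 := by positivity
        have := one_div_le_one_div_of_le h2 h1
        linarith))
      ⟨0, measure_ne_top μ _⟩
    rwa [hiInter] at this
  have hle : ENNReal.ofReal u ≤ μ (Set.Icc 0 q) := ge_of_tendsto htend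
    (Filter.Eventually.of_forall hstep')
  exact (ENNReal.ofReal_le_iff_le_toReal (measure_ne_top μ _)).1 hle

lemma qtilde_mono (hμsupp : μ (Set.Ico 0 (2 * π))ᶜ = 0) :
    Monotone (fun u => quantileF μ (min u 1)) := by
  intro u v huv
  refine csInf_le_csInf ⟨0, by rintro y ⟨h, -⟩; exact h⟩
    (quantile_set_nonempty μ hμsupp (min_le_right v 1)) ?_
  rintro y ⟨hy0, hyF⟩
  exact ⟨hy0, le_trans (min_le_min huv le_rfl) hyF⟩

/-- Pushforward of the uniform measure on `[0,1)` under the quantile function is `μ`. -/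
lemma map_qtilde (hμsupp : μ (Set.Ico 0 (2 * π))ᶜ = 0) :
    Measure.map (fun u => quantileF μ (min u 1)) (volume.restrict (Set.Ico (0:ℝ) 1)) = μ := by
  set qt := fun u => quantileF μ (min u 1) with hqt
  have hmeas : Measurable qt := (qtilde_mono μ hμsupp).measurable
  have hprob : IsProbabilityMeasure (volume.restrict (Set.Ico (0:ℝ) 1)) := by
    constructor; simp [Real.volume_Ico]
  haveI := hprob
  haveI : IsProbabilityMeasure (Measure.map qt (volume.restrict (Set.Ico (0:ℝ) 1))) :=
    Measure.isProbabilityMeasure_map hmeas.aemeasurable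
  refine MeasureTheory.Measure.ext_of_Iic _ μ (fun x => ?_)
  rw [Measure.map_apply hmeas measurableSet_Iic,
    Measure.restrict_apply' measurableSet_Ico]
  rcases lt_or_ge x 0 with hx | hx
  · have h1 : qt ⁻¹' Set.Iic x ∩ Set.Ico 0 1 = ∅ := by
      ext u
      simp only [Set.mem_inter_iff, Set.mem_preimage, Set.mem_Iic, Set.mem_Ico,
        Set.mem_empty_iff_false, iff_false, not_and]
      intro h
      exact absurd (le_trans (quantileF_nonneg μ _) h) (not_le.2 hx)
    have h2 : μ (Set.Iic x) = 0 := by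
      refine measure_mono_null (fun θ hθ => ?_) hμsupp
      simp only [Set.mem_Iic] at hθ
      simp only [Set.mem_compl_iff, Set.mem_Ico, not_and, not_lt]
      intro h0; linarith
    rw [h1, h2, measure_empty]
  · set c := distF μ x with hc
    have hc0 : 0 ≤ c := ENNReal.toReal_nonneg
    have hc1 : c ≤ 1 := by
      calc c ≤ (μ Set.univ).toReal := ENNReal.toReal_mono (measure_ne_top μ _)
            (measure_mono (Set.subset_univ _))
      _ = 1 := by simp
    have hset : qt ⁻¹' Set.Iic x ∩ Set.Ico 0 1 = Set.Iic c ∩ Set.Ico 0 1 := by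
      ext u
      simp only [Set.mem_inter_iff, Set.mem_preimage, Set.mem_Iic, Set.mem_Ico]
      constructor
      · rintro ⟨h1, h2⟩
        refine ⟨?_, h2⟩
        have hmin : min u 1 = u := min_eq_left h2.2.le
        rw [hqt] at h1; simp only at h1; rw [hmin] at h1
        exact le_trans (le_distF_quantileF μ hμsupp h2.2.le) (distF_mono μ h1)
      · rintro ⟨h1, h2⟩
        have hmin : min u 1 = u := min_eq_left h2.2.le
        refine ⟨?_, h2⟩
        show quantileF μ (min u 1) ≤ x
        rw [hmin]
        exact quantileF_le_of_le μ hx h1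
    rw [hset]
    have hvol : volume (Set.Iic c ∩ Set.Ico 0 1) = ENNReal.ofReal c := by
      rcases lt_or_eq_of_le hc1 with h | h
      · have : Set.Iic c ∩ Set.Ico 0 1 = Set.Icc 0 c := by
          ext u
          simp only [Set.mem_inter_iff, Set.mem_Iic, Set.mem_Ico, Set.mem_Icc]
          constructor
          · rintro ⟨h1, h2⟩; exact ⟨h2.1, h1⟩
          · rintro ⟨h1, h2⟩; exact ⟨h2, h1, lt_of_le_of_lt h2 h⟩
        rw [this, Real.volume_Icc, sub_zero]
      · have : Set.Iic c ∩ Set.Ico 0 1 = Set.Ico 0 1 := by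
          ext u
          simp only [Set.mem_inter_iff, Set.mem_Iic, Set.mem_Ico]
          exact ⟨fun h => h.2, fun hu => ⟨by rw [h]; exact hu.2.le, hu⟩⟩
        rw [this, Real.volume_Ico, ← h]; norm_num
    rw [hvol]
    have hIic : Set.Iic x = Set.Icc 0 x ∪ Set.Iio 0 := by
      ext θ
      simp only [Set.mem_Iic, Set.mem_union, Set.mem_Icc, Set.mem_Iio]
      constructor
      · intro h
        rcases le_or_gt 0 θ with h0 | h0
        · exact Or.inl ⟨h0, h⟩
        · exact Or.inr h0
      · rintro (⟨-, h⟩ | h)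
        · exact h
        · linarith
    have hIio : μ (Set.Iio 0) = 0 := by
      refine measure_mono_null (fun θ hθ => ?_) hμsupp
      simp only [Set.mem_Iio] at hθ
      simp only [Set.mem_compl_iff, Set.mem_Ico, not_and, not_lt]
      intro h0; linarith
    have hμx : μ (Set.Iic x) = μ (Set.Icc 0 x) := by
      rw [hIic]
      exact le_antisymm ((measure_union_le _ _).trans (by rw [hIio, add_zero]))
        (measure_mono Set.subset_union_left)
    rw [hμx, hc]
    exact ENNReal.ofReal_toReal (measure_ne_top μ _)

end aux

lemma frontier_preimage_subset_aux (f : ℝ → ℝ) (B : Set ℝ) :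
    frontier (f ⁻¹' B) ⊆ {x | ¬ ContinuousAt f x} ∪ f ⁻¹' (frontier B) := by
  intro x hx
  by_cases hc : ContinuousAt f x
  · right
    rw [Set.mem_preimage, frontier_eq_closure_inter_closure]
    constructor
    · by_contra hcl
      have hopen : IsOpen (closure B)ᶜ := isClosed_closure.isOpen_compl
      have hnhds : (closure B)ᶜ ∈ 𝓝 (f x) := hopen.mem_nhds hcl
      have hpre : f ⁻¹' (closure B)ᶜ ∈ 𝓝 x := hc hnhds
      have hsub : f ⁻¹' (closure B)ᶜ ⊆ (f ⁻¹' B)ᶜ := fun y hy hyB =>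
        hy (subset_closure hyB)
      have : x ∈ interior (f ⁻¹' B)ᶜ :=
        mem_interior_iff_mem_nhds.2 (Filter.mem_of_superset hpre hsub)
      rw [interior_compl] at this
      exact this (frontier_subset_closure hx)
    · by_contra hcl
      rw [closure_compl, Set.mem_compl_iff, not_not] at hcl
      have hnhds : interior B ∈ 𝓝 (f x) := isOpen_interior.mem_nhds hcl
      have hpre : f ⁻¹' (interior B) ∈ 𝓝 x := hc hnhds
      have : x ∈ interior (f ⁻¹' B) :=
        mem_interior_iff_mem_nhds.2
          (Filter.mem_of_superset hpre (Set.preimage_mono interior_subset))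
      exact hx.2 this
  · exact Or.inl hc

/-- Corollary 1: if `X` in `ℝ²` has regularly varying tail of index `α` with uniform
spectral measure on `S¹ ≅ [0,2π)`, `μ` is a probability measure on `[0,2π)` whose
quantile function `F⁻¹` is continuous Lebesgue-a.e. on `[0,1)`, then
`Y = (‖X‖, F⁻¹(Θ/(2π)))` (in polar coordinates, `Θ` the angular part of `X`) has a
regularly varying tail with the same index `α` and spectral measure `μ`. -/
theorem quantile_transform_regularly_varying
    {Ω : Type*} [MeasurableSpace Ω] (P : Measure Ω) [IsProbabilityMeasure P]
    (X : Ω → EuclideanSpace ℝ (Fin 2)) (hX : Measurable X)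
    (Θ : Ω → ℝ) (hΘmeas : Measurable Θ)
    (hΘrange : ∀ ω, Θ ω ∈ Set.Ico (0 : ℝ) (2 * π))
    (hΘ : ∀ ω, X ω 0 = ‖X ω‖ * Real.cos (Θ ω) ∧ X ω 1 = ‖X ω‖ * Real.sin (Θ ω))
    (α : ℝ) (hα : 0 < α) (L : ℝ → ℝ) (hLpos : ∀ x > 0, 0 < L x)
    (hL : ∀ t > 0, Tendsto (fun x => L (t * x) / L x) atTop (nhds 1))
    (hRV : ∀ B : Set ℝ, MeasurableSet B →
      (ENNReal.ofReal (2 * π)⁻¹ • volume.restrict (Set.Ico 0 (2 * π))) (frontier B) = 0 →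
      Tendsto (fun x : ℝ => x ^ α / L x * (P {ω | Θ ω ∈ B ∧ x < ‖X ω‖}).toReal)
        atTop (nhds
          (((ENNReal.ofReal (2 * π)⁻¹ • volume.restrict (Set.Ico 0 (2 * π))) B).toReal)))
    (μ : Measure ℝ) [IsProbabilityMeasure μ] (hμsupp : μ (Set.Ico 0 (2 * π))ᶜ = 0)
    (hqcont : volume ({u : ℝ | ¬ ContinuousAt (quantileF μ) u} ∩ Set.Ico 0 1) = 0) :
    ∀ B : Set ℝ, MeasurableSet B → μ (frontier B) = 0 →
      Tendsto (fun x : ℝ =>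
          x ^ α / L x * (P {ω | quantileF μ (Θ ω / (2 * π)) ∈ B ∧ x < ‖X ω‖}).toReal)
        atTop (nhds ((μ B).toReal)) := by
  intro B hBmeas hBfront
  have hπ : (0:ℝ) < 2 * π := by positivity
  set qt : ℝ → ℝ := fun u => quantileF μ (min u 1) with hqt
  have hqtmeas : Measurable qt := (qtilde_mono μ hμsupp).measurable
  set h : ℝ → ℝ := fun θ => θ / (2 * π) with hh
  have hhmeas : Measurable h := measurable_id.div_const _
  have hhcont : Continuous h := continuous_id.div_const _
  set g : ℝ → ℝ := fun θ => qt (h θ) with hg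
  have hgmeas : Measurable g := hqtmeas.comp hhmeas
  set ν : Measure ℝ := ENNReal.ofReal (2 * π)⁻¹ • volume.restrict (Set.Ico 0 (2 * π)) with hν
  -- value of ν on any set
  have hνapp : ∀ T : Set ℝ, ν T
      = ENNReal.ofReal (2 * π)⁻¹ * volume (T ∩ Set.Ico 0 (2 * π)) := by
    intro T
    rw [hν, Measure.smul_apply, smul_eq_mul, Measure.restrict_apply' measurableSet_Ico]
  -- preimage under h of a set intersected with [0,1)
  have hpre : ∀ S : Set ℝ, g ⁻¹' S ∩ Set.Ico 0 (2 * π)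
      = h ⁻¹' (qt ⁻¹' S ∩ Set.Ico 0 1) := by
    intro S
    ext θ
    simp only [Set.mem_inter_iff, Set.mem_preimage, Set.mem_Ico, hg, hh]
    constructor
    · rintro ⟨h1, h2, h3⟩
      exact ⟨h1, div_nonneg h2 hπ.le, (div_lt_one hπ).2 h3⟩
    · rintro ⟨h1, h2, h3⟩
      exact ⟨h1, le_of_not_gt fun hneg => absurd h2 (not_le.2 (div_neg_of_neg_of_pos hneg hπ)), (div_lt_one hπ).1 h3⟩
  have hvolpre : ∀ S : Set ℝ, volume (h ⁻¹' S) = ENNReal.ofReal (2 * π) * volume S := by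
    intro S
    have h2 : h = (· * (2 * π)⁻¹) := by funext θ; simp [hh, div_eq_mul_inv]
    rw [h2, Real.volume_preimage_mul_right (by positivity : ((2:ℝ) * π)⁻¹ ≠ 0)]
    congr 1
    rw [inv_inv, abs_of_pos hπ]
  have hcancel : ∀ m : ENNReal, ENNReal.ofReal (2 * π)⁻¹ * (ENNReal.ofReal (2 * π) * m) = m := by
    intro m
    rw [← mul_assoc, ← ENNReal.ofReal_mul (by positivity), inv_mul_cancel₀ hπ.ne',
      ENNReal.ofReal_one, one_mul]
  have hkey : ∀ S : Set ℝ, ν (g ⁻¹' S) = volume (qt ⁻¹' S ∩ Set.Ico 0 1) := by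
    intro S
    rw [hνapp, hpre, hvolpre, hcancel]
  have hmap : ∀ S : Set ℝ, MeasurableSet S → ν (g ⁻¹' S) = μ S := by
    intro S hS
    rw [hkey, ← Measure.restrict_apply' measurableSet_Ico,
      ← Measure.map_apply hqtmeas hS, map_qtilde μ hμsupp]
  -- the angular set
  set B' : Set ℝ := g ⁻¹' B ∩ Set.Ico 0 (2 * π) with hB'
  have hB'meas : MeasurableSet B' := (hgmeas hBmeas).inter measurableSet_Ico
  have hνB' : ν B' = μ B := by
    rw [hνapp, show B' ∩ Set.Ico 0 (2 * π) = g ⁻¹' B ∩ Set.Ico 0 (2 * π) by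
      rw [hB', Set.inter_assoc, Set.inter_self], ← hνapp, hmap B hBmeas]
  -- frontier of B' is ν-null
  have hfront : ν (frontier B') = 0 := by
    have hsub : frontier B' ⊆
        ({x | ¬ ContinuousAt g x} ∪ g ⁻¹' (frontier B)) ∪ {0, 2 * π} := by
      refine (frontier_inter_subset _ _).trans ?_
      intro x hxmem
      rcases hxmem with ⟨hx, -⟩ | ⟨-, hx⟩
      · exact Or.inl (frontier_preimage_subset_aux g B hx)
      · right
        rwa [frontier_Ico hπ] at hx
    refine measure_mono_null hsub ?_
    refine measure_union_null (measure_union_null ?_ ?_) ?_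
    · -- discontinuity set
      rw [hνapp]
      have hsub2 : {x | ¬ ContinuousAt g x} ∩ Set.Ico 0 (2 * π)
          ⊆ {0} ∪ h ⁻¹' ({u : ℝ | ¬ ContinuousAt (quantileF μ) u} ∩ Set.Ico 0 1) := by
        rintro θ ⟨hθd, hθ0, hθ2⟩
        rcases eq_or_lt_of_le hθ0 with hz | hz
        · exact Or.inl (by simp [← hz])
        · right
          have hu1 : h θ < 1 := (div_lt_one hπ).2 hθ2
          have hu0 : 0 ≤ h θ := div_nonneg hθ0 hπ.le
          refine ⟨fun hcq => hθd ?_, hu0, hu1⟩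
          have hmin : ContinuousAt (fun v : ℝ => min v 1) (h θ) :=
            (continuous_id.min continuous_const).continuousAt
          have hq2 : ContinuousAt (quantileF μ) (min (h θ) 1) := by
            rwa [min_eq_left hu1.le]
          have hcqt : ContinuousAt (quantileF μ ∘ fun v : ℝ => min v 1) (h θ) :=
            ContinuousAt.comp (x := h θ) (g := quantileF μ)
              (f := fun v : ℝ => min v 1) hq2 hmin
          have hcqt' : ContinuousAt qt (h θ) := hcqt
          have hcg : ContinuousAt (qt ∘ h) θ := hcqt'.comp hhcont.continuousAt
          exact hcg
      have : volume ({x | ¬ ContinuousAt g x} ∩ Set.Ico 0 (2 * π)) = 0 := by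
        refine measure_mono_null hsub2 (measure_union_null (measure_singleton 0) ?_)
        rw [hvolpre, hqcont, mul_zero]
      rw [this, mul_zero]
    · rw [hmap _ (isClosed_frontier.measurableSet), hBfront]
    · rw [hνapp]
      have : volume (({0, 2 * π} : Set ℝ) ∩ Set.Ico 0 (2 * π)) = 0 := by
        refine measure_mono_null Set.inter_subset_left ?_
        rw [Set.insert_eq]
        exact measure_union_null (measure_singleton _) (measure_singleton _)
      rw [this, mul_zero]
  have hconc := hRV B' hB'meas hfront
  rw [hνB'] at hconc
  have hsets : ∀ x : ℝ, {ω | quantileF μ (Θ ω / (2 * π)) ∈ B ∧ x < ‖X ω‖}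
      = {ω | Θ ω ∈ B' ∧ x < ‖X ω‖} := by
    intro x
    ext ω
    have hr := hΘrange ω
    have hu1 : Θ ω / (2 * π) < 1 := (div_lt_one hπ).2 hr.2
    simp only [Set.mem_setOf_eq, hB', Set.mem_inter_iff, Set.mem_preimage, hg, hh, hqt]
    rw [min_eq_left hu1.le]
    exact ⟨fun ⟨h1, h2⟩ => ⟨⟨h1, hr⟩, h2⟩, fun ⟨⟨h1, _⟩, h2⟩ => ⟨h1, h2⟩⟩
  have hfun : (fun x : ℝ =>
        x ^ α / L x * (P {ω | quantileF μ (Θ ω / (2 * π)) ∈ B ∧ x < ‖X ω‖}).toReal)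
      = fun x : ℝ => x ^ α / L x * (P {ω | Θ ω ∈ B' ∧ x < ‖X ω‖}).toReal := by
    funext x; rw [hsets x]
  rw [hfun]
  exact hconc
end

section
/- Fix α > 0 and ν > 0, and choose β with 1/α < β < (1+ν)/α. Let X be the random vector in ℝ^2 supported on the rays L_k through angles b_k = π − π/2^{k-1}, with P(X ∈ A) = Σ_k q_k Q_k(A ∩ L_k), q_k = 1/(k(k+1)), where Q_k has radial distribution function F_k(x) = 1 − k^{-ν} x^{-α} for x ≥ 1. Then: (a) X has a regularly varying tail of index α with spectral measure σ({b_k}) = q_k k^{-ν}; (b) for the σ-a.e. continuous but unbounded function h = Σ_k k^β 1_{I_k} (I_k disjoint arcs around b_k), the vector Y = X h(X/‖X‖) satisfies r^α P(‖Y‖ > r) ≥ r^α / (r^{1/β} + 1) for all r > 1, hence r^α P(‖Y‖ > r) → ∞ as r → ∞, so Y does not have a regularly varying tail of index α. -/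
open Set Topology MeasureTheory Filter Real

/-- The angles `b_k = π - π/2^{k-1}`, `k ≥ 1`, of Example 2. -/
noncomputable def bAngle (k : ℕ) : ℝ := π - π / 2 ^ (k - 1)

/-- The weights `q_k = 1/(k(k+1))`, `k ≥ 1`, of Example 2. -/
noncomputable def qWeight (k : ℕ) : ℝ := 1 / (k * (k + 1))

/-- The disjoint arcs `I_k` of Example 2 :
`I₁ = (7π/4, 2π) ∪ [0, π/4)` and `I_k = (b_k - π/2^{k+1}, b_k + π/2^{k+1})` for `k ≥ 2`. -/
noncomputable def arcI (k : ℕ) : Set ℝ :=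
  if k = 1 then Set.Ioo (7 * π / 4) (2 * π) ∪ Set.Ico 0 (π / 4)
  else Set.Ioo (bAngle k - π / 2 ^ (k + 1)) (bAngle k + π / 2 ^ (k + 1))

/-- The unbounded, `σ`-a.e. continuous function `h = Σ_k k^β 1_{I_k}` of Example 2. -/
noncomputable def hEx2 (β : ℝ) (x : ℝ) : ℝ :=
  ∑' k : ℕ, (arcI (k + 1)).indicator (fun _ => ((k : ℝ) + 1) ^ β) x

/-- The spectral measure `σ({b_k}) = q_k k^{-ν}` of Example 2. -/
noncomputable def σEx2 (ν : ℝ) : Measure ℝ :=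
  Measure.sum fun k : ℕ =>
    ENNReal.ofReal (qWeight (k + 1) * ((k : ℝ) + 1) ^ (-ν)) • Measure.dirac (bAngle (k + 1))

lemma bAngle_succ (k : ℕ) : bAngle (k + 1) = π - π / 2 ^ k := by simp [bAngle]

lemma pidiv_pos (k : ℕ) : 0 < π / 2 ^ k := div_pos pi_pos (pow_pos two_pos k)

lemma pidiv_mono {a b : ℕ} (h : a ≤ b) : π / 2 ^ b ≤ π / 2 ^ a :=
  div_le_div_of_nonneg_left pi_pos.le (pow_pos two_pos a) (pow_le_pow_right₀ one_le_two h)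

lemma bAngle_inj : Function.Injective (fun k : ℕ => bAngle (k + 1)) := by
  intro j k h
  simp only [bAngle_succ] at h
  have hπ := pi_pos
  have : π / 2 ^ j = π / 2 ^ k := by linarith
  field_simp at this
  exact Nat.pow_right_injective le_rfl (by exact_mod_cast this.symm)

lemma mem_arcI_iff (j k : ℕ) : bAngle (k + 1) ∈ arcI (j + 1) ↔ j = k := by
  have hπ := pi_pos
  match j with
  | 0 =>
    simp only [arcI, if_pos rfl, bAngle_succ]
    constructor
    · rintro (⟨h1, h2⟩ | ⟨h1, h2⟩)
      · exfalso
        have := pidiv_pos k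
        nlinarith
      · by_contra hk
        have hk1 : 1 ≤ k := Nat.one_le_iff_ne_zero.2 (fun h => hk h.symm)
        have : π / 2 ^ k ≤ π / 2 ^ 1 := pidiv_mono hk1
        norm_num at this; nlinarith
    · rintro rfl
      right
      norm_num
      nlinarith
  | (j' + 1) =>
    have hne : j' + 1 + 1 ≠ 1 := by omega
    simp only [arcI, if_neg hne, bAngle_succ, mem_Ioo]
    constructor
    · rintro ⟨h1, h2⟩
      by_contra hjk
      rcases lt_or_gt_of_ne (fun h => hjk h) with hgt | hlt
      · -- k > j' + 1, i.e. k ≥ j' + 2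
        have hk : π / 2 ^ k ≤ π / 2 ^ (j' + 2) := pidiv_mono (by omega)
        have e2 : π / 2 ^ (j' + 1) = 2 * (π / 2 ^ (j' + 2)) := by
          rw [pow_succ]; field_simp; ring
        have e3 : π / 2 ^ (j' + 1 + 1 + 1) < π / 2 ^ (j' + 2) := by
          apply div_lt_div_of_pos_left hπ (pow_pos two_pos _)
          exact pow_lt_pow_right₀ one_lt_two (by omega)
        nlinarith
      · -- k < j' + 1, i.e. k ≤ j'
        have hk : π / 2 ^ j' ≤ π / 2 ^ k := pidiv_mono (by omega)
        have e2 : π / 2 ^ j' = 2 * (π / 2 ^ (j' + 1)) := by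
          rw [pow_succ]; field_simp
        have e3 : π / 2 ^ (j' + 1 + 1 + 1) < π / 2 ^ (j' + 1) := by
          apply div_lt_div_of_pos_left hπ (pow_pos two_pos _)
          exact pow_lt_pow_right₀ one_lt_two (by omega)
        nlinarith
    · rintro rfl
      constructor <;> nlinarith [pidiv_pos (j' + 1 + 1 + 1)]

lemma hEx2_bAngle (β : ℝ) (k : ℕ) : hEx2 β (bAngle (k + 1)) = ((k : ℝ) + 1) ^ β := by
  unfold hEx2
  rw [tsum_eq_single k]
  · rw [Set.indicator_of_mem ((mem_arcI_iff k k).2 rfl)]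
  · intro j hj
    exact Set.indicator_of_notMem (fun hm => hj ((mem_arcI_iff j k).1 hm)) _

lemma qWeight_hasSum (m : ℕ) :
    HasSum (fun j : ℕ => qWeight (m + j + 1)) (1 / ((m : ℝ) + 1)) := by
  have key : ∀ j : ℕ, qWeight (m + j + 1)
      = 1 / ((m : ℝ) + 1 + j) - 1 / ((m : ℝ) + 1 + (j + 1)) := by
    intro j
    have h1 : (0:ℝ) < (m : ℝ) + 1 + j := by positivity
    have h2 : (0:ℝ) < (m : ℝ) + 1 + (j + 1) := by positivity
    unfold qWeight
    push_cast
    field_simp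
    ring
  rw [(hasSum_iff_tendsto_nat_of_nonneg (fun j => by
    unfold qWeight; positivity) _)]
  have hsum : ∀ N : ℕ, ∑ j ∈ Finset.range N, qWeight (m + j + 1)
      = 1 / ((m : ℝ) + 1) - 1 / ((m : ℝ) + 1 + N) := by
    intro N
    calc ∑ j ∈ Finset.range N, qWeight (m + j + 1)
        = ∑ j ∈ Finset.range N, ((fun i : ℕ => 1 / ((m : ℝ) + 1 + i)) j
            - (fun i : ℕ => 1 / ((m : ℝ) + 1 + i)) (j + 1)) := by
          exact Finset.sum_congr rfl (fun j _ => by rw [key j]; push_cast; ring_nf)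
      _ = 1 / ((m : ℝ) + 1 + (0:ℕ)) - 1 / ((m : ℝ) + 1 + N) := Finset.sum_range_sub' _ N
      _ = 1 / ((m : ℝ) + 1) - 1 / ((m : ℝ) + 1 + N) := by norm_num
  simp only [hsum]
  have : Tendsto (fun N : ℕ => 1 / ((m : ℝ) + 1 + N)) atTop (nhds 0) := by
    have h := tendsto_inv_atTop_zero.comp
      (tendsto_atTop_add_const_left atTop ((m : ℝ) + 1) tendsto_natCast_atTop_atTop)
    exact h.congr (fun N => by simp [Function.comp, one_div])
  simpa using (tendsto_const_nhds.sub this)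

lemma qWeight_ennreal_sum (m : ℕ) :
    ∑' j : ℕ, ENNReal.ofReal (qWeight (m + j + 1)) = ENNReal.ofReal (1 / ((m : ℝ) + 1)) := by
  rw [← ENNReal.ofReal_tsum_of_nonneg (fun j => by unfold qWeight; positivity)
      (qWeight_hasSum m).summable, (qWeight_hasSum m).tsum_eq]

lemma σEx2_apply (ν : ℝ) {B : Set ℝ} (hB : MeasurableSet B) :
    σEx2 ν B = ∑' k : ℕ,
      B.indicator (fun _ => ENNReal.ofReal (qWeight (k + 1) * ((k : ℝ) + 1) ^ (-ν)))
        (bAngle (k + 1)) := by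
  rw [σEx2, Measure.sum_apply _ hB]
  refine tsum_congr fun k => ?_
  rw [Measure.smul_apply, Measure.dirac_apply' _ hB, smul_eq_mul]
  by_cases h : bAngle (k + 1) ∈ B <;> simp [Set.indicator, h]

lemma σEx2_ne_top (ν : ℝ) (hν : 0 < ν) (B : Set ℝ) : σEx2 ν B ≠ ⊤ := by
  have h1 : σEx2 ν B ≤ σEx2 ν univ := measure_mono (subset_univ B)
  have h2 : σEx2 ν univ ≤ ENNReal.ofReal 1 := by
    rw [σEx2_apply ν MeasurableSet.univ]
    have key := qWeight_ennreal_sum 0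
    simp only [Nat.zero_add] at key
    calc ∑' k : ℕ, (univ : Set ℝ).indicator
          (fun _ => ENNReal.ofReal (qWeight (k + 1) * ((k : ℝ) + 1) ^ (-ν))) (bAngle (k + 1))
        ≤ ∑' k : ℕ, ENNReal.ofReal (qWeight (k + 1)) := by
          refine ENNReal.tsum_le_tsum fun k => ?_
          rw [Set.indicator_of_mem (mem_univ _)]
          refine ENNReal.ofReal_le_ofReal ?_
          have h0 : (0:ℝ) ≤ qWeight (k + 1) := by unfold qWeight; positivity
          have h3 : ((k : ℝ) + 1) ^ (-ν) ≤ 1 :=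
            Real.rpow_le_one_of_one_le_of_nonpos (by have := Nat.cast_nonneg (α := ℝ) k; linarith)
              (by linarith)
          nlinarith
      _ = ENNReal.ofReal (1 / (((0:ℕ):ℝ) + 1)) := key
      _ = ENNReal.ofReal 1 := by norm_num
  exact ((h1.trans h2).trans_lt ENNReal.ofReal_lt_top).ne

/-- Example 2: the vector `X` in `ℝ²` supported on the rays through the angles `b_k`
with radial tails `q_k k^{-ν} x^{-α}` (for `x ≥ 1`) has a regularly varying tail of
index `α` with spectral measure `σEx2 ν`; but for `1/α < β < (1+ν)/α`, the transformed
vector `Y = X · h(X/‖X‖)` with `h = hEx2 β` satisfies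
`r^α P(‖Y‖ > r) ≥ r^α/(r^{1/β}+1) → ∞`, so `Y` is not regularly varying of index `α`. -/
theorem example_unbounded_radial_function
    {Ω : Type*} [MeasurableSpace Ω] (P : Measure Ω) [IsProbabilityMeasure P]
    (X : Ω → EuclideanSpace ℝ (Fin 2)) (hX : Measurable X)
    (Θ : Ω → ℝ) (hΘmeas : Measurable Θ)
    (hΘ : ∀ ω, X ω 0 = ‖X ω‖ * Real.cos (Θ ω) ∧ X ω 1 = ‖X ω‖ * Real.sin (Θ ω))
    (α ν β : ℝ) (hα : 0 < α) (hν : 0 < ν) (hβ₁ : 1 / α < β) (hβ₂ : β < (1 + ν) / α)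
    -- the law of X : the angular part takes only the values b_k, the radial part has
    -- distribution function F_k(x) = 1 - k^{-ν} x^{-α} on each ray, and ‖X‖ ≥ 1 a.s.
    (hlaw : ∀ k : ℕ, ∀ x : ℝ, 1 ≤ x →
      P {ω | Θ ω = bAngle (k + 1) ∧ x < ‖X ω‖}
        = ENNReal.ofReal (qWeight (k + 1) * ((k : ℝ) + 1) ^ (-ν) * x ^ (-α)))
    (hmass : ∀ k : ℕ, P {ω | Θ ω = bAngle (k + 1)} = ENNReal.ofReal (qWeight (k + 1)))
    (hnorm : P {ω | ‖X ω‖ < 1} = 0)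
    (hsupp : P {ω | ∀ k : ℕ, Θ ω ≠ bAngle (k + 1)} = 0) :
    -- (a) X has regularly varying tail of index α with spectral measure σEx2 ν
    (∀ B : Set ℝ, MeasurableSet B → σEx2 ν (frontier B) = 0 → ∀ r > 1,
      r ^ α * (P {ω | Θ ω ∈ B ∧ r < ‖X ω‖}).toReal = ((σEx2 ν) B).toReal) ∧
    -- (b) the transformed vector Y = X h(X/‖X‖) is not regularly varying of index α
    (∀ r > 1,
      r ^ α / (r ^ (1 / β) + 1)
        ≤ r ^ α * (P {ω | r < ‖X ω‖ * hEx2 β (Θ ω)}).toReal) ∧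
    Tendsto (fun r : ℝ => r ^ α * (P {ω | r < ‖X ω‖ * hEx2 β (Θ ω)}).toReal)
      atTop atTop := by
  have hβpos : 0 < β := lt_trans (by positivity) hβ₁
  have hN : Measurable fun ω => ‖X ω‖ := hX.norm
  have hT : ∀ k : ℕ, MeasurableSet {ω | Θ ω = bAngle (k + 1)} :=
    fun k => hΘmeas (measurableSet_singleton _)
  have hScnull : P (⋃ k : ℕ, {ω | Θ ω = bAngle (k + 1)})ᶜ = 0 := by
    convert hsupp using 2
    ext ω; simp
  -- part (a)
  have parta : ∀ B : Set ℝ, MeasurableSet B → σEx2 ν (frontier B) = 0 → ∀ r > 1,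
      r ^ α * (P {ω | Θ ω ∈ B ∧ r < ‖X ω‖}).toReal = ((σEx2 ν) B).toReal := by
    intro B hB _ r hr
    have hr0 : (0:ℝ) < r := lt_trans one_pos hr
    set A := {ω | Θ ω ∈ B ∧ r < ‖X ω‖} with hA
    have hAmeas : MeasurableSet A := (hΘmeas hB).inter (measurableSet_lt measurable_const hN)
    have hPA : P A = ∑' k : ℕ, B.indicator
        (fun _ => ENNReal.ofReal (qWeight (k + 1) * ((k : ℝ) + 1) ^ (-ν) * r ^ (-α)))
        (bAngle (k + 1)) := by
      have h1 : P A = P (A ∩ ⋃ k : ℕ, {ω | Θ ω = bAngle (k + 1)}) := by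
        rw [show A ∩ (⋃ k : ℕ, {ω | Θ ω = bAngle (k + 1)})
            = A \ (⋃ k : ℕ, {ω | Θ ω = bAngle (k + 1)})ᶜ by rw [Set.diff_compl]]
        exact (measure_diff_null hScnull).symm
      rw [h1, Set.inter_iUnion, measure_iUnion ?_ (fun k => hAmeas.inter (hT k))]
      · refine tsum_congr fun k => ?_
        by_cases hk : bAngle (k + 1) ∈ B
        · rw [Set.indicator_of_mem hk]
          have he : A ∩ {ω | Θ ω = bAngle (k + 1)}
              = {ω | Θ ω = bAngle (k + 1) ∧ r < ‖X ω‖} := by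
            ext ω
            simp only [hA, Set.mem_inter_iff, Set.mem_setOf_eq]
            constructor
            · rintro ⟨⟨_, h2⟩, h3⟩; exact ⟨h3, h2⟩
            · rintro ⟨h3, h2⟩; exact ⟨⟨h3 ▸ hk, h2⟩, h3⟩
          rw [he, hlaw k r hr.le]
        · rw [Set.indicator_of_notMem hk]
          have he : A ∩ {ω | Θ ω = bAngle (k + 1)} = ∅ := by
            ext ω
            simp only [hA, Set.mem_inter_iff, Set.mem_setOf_eq, Set.mem_empty_iff_false,
              iff_false, not_and]
            rintro ⟨h1, _⟩ h3
            exact hk (h3 ▸ h1)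
          rw [he, measure_empty]
      · intro i j hij
        refine Set.disjoint_left.2 fun ω hi hj => hij ?_
        exact bAngle_inj (hi.2.symm.trans hj.2 : bAngle (i+1) = bAngle (j+1))
    have hmul : P A = ENNReal.ofReal (r ^ (-α)) * σEx2 ν B := by
      rw [hPA, σEx2_apply ν hB, ← ENNReal.tsum_mul_left]
      refine tsum_congr fun k => ?_
      by_cases hk : bAngle (k + 1) ∈ B
      · rw [Set.indicator_of_mem hk, Set.indicator_of_mem hk,
          ← ENNReal.ofReal_mul (Real.rpow_nonneg hr0.le _)]
        congr 1; ring
      · rw [Set.indicator_of_notMem hk, Set.indicator_of_notMem hk, mul_zero]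
    rw [hmul, ENNReal.toReal_mul, ENNReal.toReal_ofReal (Real.rpow_nonneg hr0.le _),
      Real.rpow_neg hr0.le, ← mul_assoc, mul_inv_cancel₀ (Real.rpow_pos_of_pos hr0 α).ne',
      one_mul]
  -- part (b)
  have partb : ∀ r > 1, r ^ α / (r ^ (1 / β) + 1)
      ≤ r ^ α * (P {ω | r < ‖X ω‖ * hEx2 β (Θ ω)}).toReal := by
    intro r hr
    have hr0 : (0:ℝ) < r := lt_trans one_pos hr
    set x := r ^ (1 / β) with hxdef
    have hx1 : 1 < x := (Real.one_lt_rpow_iff hr0.le).2 (Or.inl ⟨hr, by positivity⟩)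
    have hx0 : 0 < x := lt_trans one_pos hx1
    set m := ⌊x⌋₊ with hm
    have hxm : x < (m : ℝ) + 1 := Nat.lt_floor_add_one x
    have hmx : (m : ℝ) ≤ x := Nat.floor_le hx0.le
    set E := {ω | r < ‖X ω‖ * hEx2 β (Θ ω)} with hE
    set C : ℕ → Set Ω := fun j =>
      {ω | Θ ω = bAngle (m + j + 1)} \ {ω | ‖X ω‖ < 1} with hC
    have hCsub : ∀ j, C j ⊆ E := by
      intro j ω hω
      obtain ⟨hθ, hn⟩ := hω
      simp only [Set.mem_setOf_eq, not_lt] at hθ hn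
      simp only [hE, Set.mem_setOf_eq]
      have hh : hEx2 β (Θ ω) = (((m + j : ℕ) : ℝ) + 1) ^ β := by
        rw [hθ, hEx2_bAngle]
      have hp : x < ((m + j : ℕ) : ℝ) + 1 := by
        refine lt_of_lt_of_le hxm ?_
        push_cast
        linarith [Nat.cast_nonneg (α := ℝ) j]
      have hrp : r < (((m + j : ℕ) : ℝ) + 1) ^ β := by
        have h1 : x ^ β < (((m + j : ℕ) : ℝ) + 1) ^ β :=
          Real.rpow_lt_rpow hx0.le hp hβpos
        have h2 : x ^ β = r := by
          rw [hxdef, ← Real.rpow_mul hr0.le, one_div_mul_cancel hβpos.ne', Real.rpow_one]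
        linarith
      rw [hh]
      have hpow : (0:ℝ) < (((m + j : ℕ) : ℝ) + 1) ^ β :=
        Real.rpow_pos_of_pos (by positivity) β
      nlinarith
    have hPE : ENNReal.ofReal (1 / ((m : ℝ) + 1)) ≤ P E := by
      calc ENNReal.ofReal (1 / ((m : ℝ) + 1))
          = ∑' j : ℕ, ENNReal.ofReal (qWeight (m + j + 1)) := (qWeight_ennreal_sum m).symm
        _ = ∑' j : ℕ, P (C j) := by
            refine tsum_congr fun j => ?_
            rw [hC]
            rw [measure_diff_null hnorm]
            exact (hmass (m + j)).symm
        _ = P (⋃ j, C j) := by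
            refine (measure_iUnion ?_ fun j => (hT (m + j)).diff
              (measurableSet_lt hN measurable_const)).symm
            intro i j hij
            refine Set.disjoint_left.2 fun ω hi hj => hij ?_
            have := bAngle_inj (hi.1.symm.trans hj.1 : bAngle (m+i+1) = bAngle (m+j+1))
            omega
        _ ≤ P E := measure_mono (Set.iUnion_subset hCsub)
    have h1 : 1 / ((m : ℝ) + 1) ≤ (P E).toReal :=
      (ENNReal.ofReal_le_iff_le_toReal (measure_ne_top P E)).1 hPE
    have h2 : 1 / (x + 1) ≤ 1 / ((m : ℝ) + 1) :=
      one_div_le_one_div_of_le (by positivity) (by linarith)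
    calc r ^ α / (x + 1) = r ^ α * (1 / (x + 1)) := by ring
      _ ≤ r ^ α * (P E).toReal :=
          mul_le_mul_of_nonneg_left (h2.trans h1) (Real.rpow_nonneg hr0.le α)
  refine ⟨parta, partb, ?_⟩
  -- part (c)
  have hδ : 0 < α - 1 / β := by
    have h1 : 1 < β * α := (div_lt_iff₀ hα).1 hβ₁
    have h2 : 1 / β < α := (div_lt_iff₀ hβpos).2 (by linarith)
    linarith
  have hL : Tendsto (fun r : ℝ => r ^ (α - 1 / β) / 2) atTop atTop :=
    (tendsto_rpow_atTop hδ).atTop_div_const two_pos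
  refine tendsto_atTop_mono' atTop ?_ hL
  filter_upwards [eventually_gt_atTop 1] with r hr
  have hr0 : (0:ℝ) < r := lt_trans one_pos hr
  have hx1 : 1 ≤ r ^ (1 / β) :=
    Real.one_le_rpow hr.le (by positivity)
  have hxpos : 0 < r ^ (1 / β) := Real.rpow_pos_of_pos hr0 _
  have step1 : r ^ (α - 1 / β) / 2 ≤ r ^ α / (r ^ (1 / β) + 1) := by
    rw [Real.rpow_sub hr0, div_div]
    exact div_le_div_of_nonneg_left (Real.rpow_nonneg hr0.le α) (by positivity)
      (by linarith)
  exact step1.trans (partb r hr)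
end
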